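/- arXiv:2205.08458 — 2 statements merged into one kernel-verified Lean document; each statement's English description precedes it below -/
import Mathlib

section
/- Consider K ≥ 2 users with general groupwise keys given by a family 𝒢̄ of subsets of {1,…,K}, each of size at least 2, where for each 𝒢 ∈ 𝒢̄ the key S_𝒢 is uniformly distributed on (ZMod q)^{|𝒢|−1}, the keys are mutually independent and independent of the inputs W_1,…,W_K, which are mutually independent and uniform on ZMod q. For each 𝒢 ∈ 𝒢̄ of size g with enumeration u_1,…,u_g, set h_𝒢^{u_i} = e_i (i ≤ g−1), h_𝒢^{u_g} = −(e_1+⋯+e_{g−1}), and h_𝒢^u = 0 for u ∉ 𝒢, and define the messages X_k = W_k + Σ_{𝒢∈𝒢̄, k∈𝒢} h_𝒢^k · S_𝒢 (a scalar in ZMod q). Then (i) X_1+⋯+X_K = W_1+⋯+W_K almost surely, and (ii) for every T ⊆ {1,…,K} such that the hypergraph on node set {1,…,K}\T with edge set {𝒢 ∈ 𝒢̄ : 𝒢 ∩ T = ∅} is connected, the security constraint I((W_k)_{k∈[K]}; (X_k)_{k∈[K]} | W_1+⋯+W_K, (W_k, Z_k)_{k∈T}) = 0 holds, where Z_k = (S_𝒢)_{𝒢∈𝒢̄,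 k∈𝒢}. -/
open MeasureTheory ProbabilityTheory

/-- Shannon entropy (in natural log units) of a finitely-valued random variable. -/
noncomputable def entr {Ω : Type*} [MeasurableSpace Ω] (μ : Measure Ω)
    {α : Type*} [Fintype α] [MeasurableSpace α] (X : Ω → α) : ℝ :=
  ∑ a : α, Real.negMulLog ((μ.map X) {a}).toReal

/-- Conditional Shannon entropy `H(X | Y)`. -/
noncomputable def condEntr {Ω : Type*} [MeasurableSpace Ω] (μ : Measure Ω)
    {α β : Type*} [Fintype α] [MeasurableSpace α] [Fintype β] [MeasurableSpace β]
    (X : Ω → α) (Y : Ω → β) : ℝ :=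
  entr μ (fun ω => (X ω, Y ω)) - entr μ Y

/-- Conditional mutual information `I(X ; Y | Z)`. -/
noncomputable def condMI {Ω : Type*} [MeasurableSpace Ω] (μ : Measure Ω)
    {α β γ : Type*} [Fintype α] [MeasurableSpace α] [Fintype β] [MeasurableSpace β]
    [Fintype γ] [MeasurableSpace γ] (X : Ω → α) (Y : Ω → β) (Z : Ω → γ) : ℝ :=
  condEntr μ X Z + condEntr μ Y Z - condEntr μ (fun ω => (X ω, Y ω)) Z

/-- A random variable is uniformly distributed on a finite type. -/
def IsUnif {Ω : Type*} [MeasurableSpace Ω] (μ : Measure Ω)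
    {α : Type*} [Fintype α] [MeasurableSpace α] (X : Ω → α) : Prop :=
  ∀ a : α, μ (X ⁻¹' {a}) = (Fintype.card α : ENNReal)⁻¹



open Finset Real


noncomputable def cnt {V : Type*} (p : V → Prop) : ℕ := Nat.card {v // p v}

lemma cnt_congr {V : Type*} {p q : V → Prop} (h : ∀ v, p v ↔ q v) : cnt p = cnt q :=
  Nat.card_congr (Equiv.subtypeEquivRight h)

lemma cnt_ne_zero {V : Type*} [Finite V] {p : V → Prop} (h : ∃ v, p v) : cnt p ≠ 0 := by
  have : Nonempty {v // p v} := ⟨⟨h.choose, h.choose_spec⟩⟩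
  exact Nat.card_pos.ne'

lemma cnt_eq_zero {V : Type*} {p : V → Prop} (h : ∀ v, ¬ p v) : cnt p = 0 := by
  have : IsEmpty {v // p v} := ⟨fun v => h v.1 v.2⟩
  simp [cnt]

lemma cnt_partition {V M : Type*} [Finite V] [Fintype M] (G : V → M) (p : V → Prop) :
    cnt p = ∑ z : M, cnt (fun v => p v ∧ G v = z) := by
  classical
  cases nonempty_fintype V
  unfold cnt
  have e : {v // p v} ≃ Σ z : M, {v // p v ∧ G v = z} :=
    ((Equiv.sigmaFiberEquiv (fun a : {v // p v} => G a.1)).symm.trans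
      (Equiv.sigmaCongrRight (fun z =>
        (Equiv.subtypeSubtypeEquivSubtypeInter p (fun v => G v = z)))))
  rw [Nat.card_congr e, Nat.card_eq_fintype_card, Fintype.card_sigma]
  simp [Nat.card_eq_fintype_card]

lemma cnt_equiv {V W : Type*} {p : V → Prop} {q : W → Prop} (e : V ≃ W)
    (h : ∀ v, p v ↔ q (e v)) : cnt p = cnt q :=
  Nat.card_congr (e.subtypeEquiv h)

lemma cnt_prod {A B : Type*} (pa : A → Prop) (pb : B → Prop) :
    cnt (fun x : A × B => pa x.1 ∧ pb x.2) = cnt pa * cnt pb := by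
  unfold cnt
  rw [← Nat.card_prod]
  exact Nat.card_congr (Equiv.subtypeProdEquivProd)

lemma cnt_filter {V : Type*} [Fintype V] (p : V → Prop) [DecidablePred p] :
    cnt p = (Finset.univ.filter p).card := by
  rw [cnt, Nat.card_eq_fintype_card, Fintype.card_subtype]

section Translate

variable {V M N P : Type*} [AddCommGroup V] [AddCommGroup M] [AddCommGroup N] [AddCommGroup P]

lemma unb_map_sub (F : V → M) (hF : ∀ x y, F (x + y) = F x + F y) (x y : V) :
    F (x - y) = F x - F y := (AddMonoidHom.mk' F hF).map_sub x y

lemma unb_map_zero (F : V → M) (hF : ∀ x y, F (x + y) = F x + F y) : F 0 = 0 :=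
  (AddMonoidHom.mk' F hF).map_zero

lemma cnt_translate (F : V → M) (hF : ∀ x y, F (x + y) = F x + F y) (v0 : V) :
    cnt (fun v => F v = F v0) = cnt (fun v => F v = 0) :=
  cnt_equiv (Equiv.subRight v0) fun v => by
    simp [Equiv.subRight, unb_map_sub F hF, sub_eq_zero]

lemma cnt_translate2 (F : V → M) (G : V → N)
    (hF : ∀ x y, F (x + y) = F x + F y) (hG : ∀ x y, G (x + y) = G x + G y) (v0 : V) :
    cnt (fun v => F v = F v0 ∧ G v = G v0) = cnt (fun v => F v = 0 ∧ G v = 0) :=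
  cnt_equiv (Equiv.subRight v0) fun v => by
    simp [Equiv.subRight, unb_map_sub F hF, unb_map_sub G hG, sub_eq_zero]

lemma cnt_translate3 (F : V → M) (G : V → N) (H : V → P)
    (hF : ∀ x y, F (x + y) = F x + F y) (hG : ∀ x y, G (x + y) = G x + G y)
    (hH : ∀ x y, H (x + y) = H x + H y) (v0 : V) :
    cnt (fun v => F v = F v0 ∧ G v = G v0 ∧ H v = H v0)
      = cnt (fun v => F v = 0 ∧ G v = 0 ∧ H v = 0) :=
  cnt_equiv (Equiv.subRight v0) fun v => by
    simp [Equiv.subRight, unb_map_sub F hF, unb_map_sub G hG, unb_map_sub H hH, sub_eq_zero]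

end Translate

section CountFactor

variable {V A B C : Type*} [Fintype V] [AddCommGroup V] [Fintype A] [Fintype B]
  [AddCommGroup A] [AddCommGroup B] [AddCommGroup C]
  (FA : V → A) (FB : V → B) (FC : V → C)

theorem count_factor
    (hA : ∀ x y, FA (x + y) = FA x + FA y) (hB : ∀ x y, FB (x + y) = FB x + FB y)
    (hC : ∀ x y, FC (x + y) = FC x + FC y)
    (R : ∀ v1 v2, FC v1 = FC v2 → ∃ v, FA v = FA v1 ∧ FB v = FB v2 ∧ FC v = FC v1) :
    ∀ a b c, cnt (fun v => FA v = a ∧ FB v = b ∧ FC v = c) * cnt (fun v => FC v = c)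
      = cnt (fun v => FA v = a ∧ FC v = c) * cnt (fun v => FB v = b ∧ FC v = c) := by
  classical
  set kABC := cnt (fun v => FA v = 0 ∧ FB v = 0 ∧ FC v = 0) with hkABC
  set kAC := cnt (fun v => FA v = 0 ∧ FC v = 0) with hkAC
  set kBC := cnt (fun v => FB v = 0 ∧ FC v = 0) with hkBC
  set kC := cnt (fun v : V => FC v = 0) with hkC
  set nA := cnt (fun a : A => ∃ v, FA v = a ∧ FC v = 0) with hnA
  set nB := cnt (fun b : B => ∃ v, FB v = b ∧ FC v = 0) with hnB
  have hC0 : FC 0 = 0 := unb_map_zero FC hC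
  have hkCne : kC ≠ 0 := cnt_ne_zero ⟨0, hC0⟩
  -- kC = nA * nB * kABC
  have hC1 : kC = nA * nB * kABC := by
    rw [hkC, cnt_partition (fun v => (FA v, FB v))]
    have step : ∀ z : A × B, cnt (fun v => FC v = 0 ∧ (FA v, FB v) = z)
        = if (∃ v, FA v = z.1 ∧ FB v = z.2 ∧ FC v = 0) then kABC else 0 := by
      intro z
      by_cases hw : ∃ v, FA v = z.1 ∧ FB v = z.2 ∧ FC v = 0
      · obtain ⟨v0, h1, h2, h3⟩ := hw
        rw [if_pos ⟨v0, h1, h2, h3⟩]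
        rw [show kABC = cnt (fun v => FA v = FA v0 ∧ FB v = FB v0 ∧ FC v = FC v0) from
          (by rw [cnt_translate3 FA FB FC hA hB hC v0])]
        exact cnt_congr fun v => by
          rw [h1, h2, h3, Prod.mk.injEq]; tauto
      · rw [if_neg hw]
        exact cnt_eq_zero fun v hv => hw ⟨v, by
          obtain ⟨h1, h2⟩ := hv
          rw [Prod.mk.injEq] at h2
          exact ⟨h2.1, h2.2, h1⟩⟩
    rw [Finset.sum_congr rfl (fun z _ => step z), Finset.sum_ite, Finset.sum_const,
      Finset.sum_const_zero, add_zero, smul_eq_mul]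
    congr 1
    rw [hnA, hnB, ← cnt_prod, cnt_filter]
    exact congrArg Finset.card (Finset.filter_congr fun z _ => by
      constructor
      · rintro ⟨v, h1, h2, h3⟩
        exact ⟨⟨v, h1, h3⟩, ⟨v, h2, h3⟩⟩
      · rintro ⟨⟨v1, h1, h3⟩, ⟨v2, h2, h4⟩⟩
        obtain ⟨v, e1, e2, e3⟩ := R v1 v2 (by rw [h3, h4])
        exact ⟨v, by rw [e1, h1], by rw [e2, h2], by rw [e3, h3]⟩)
  -- kC = nA * kAC
  have hA1 : kC = nA * kAC := by
    rw [hkC, cnt_partition FA]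
    have step : ∀ z : A, cnt (fun v => FC v = 0 ∧ FA v = z)
        = if (∃ v, FA v = z ∧ FC v = 0) then kAC else 0 := by
      intro z
      by_cases hw : ∃ v, FA v = z ∧ FC v = 0
      · obtain ⟨v0, h1, h3⟩ := hw
        rw [if_pos ⟨v0, h1, h3⟩]
        rw [show kAC = cnt (fun v => FA v = FA v0 ∧ FC v = FC v0) from
          (by rw [cnt_translate2 FA FC hA hC v0])]
        exact cnt_congr fun v => by rw [h1, h3]; tauto
      · rw [if_neg hw]
        exact cnt_eq_zero fun v hv => hw ⟨v, hv.2, hv.1⟩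
    rw [Finset.sum_congr rfl (fun z _ => step z), Finset.sum_ite, Finset.sum_const,
      Finset.sum_const_zero, add_zero, smul_eq_mul]
    congr 1
    rw [hnA, cnt_filter]
  -- kC = nB * kBC
  have hB1 : kC = nB * kBC := by
    rw [hkC, cnt_partition FB]
    have step : ∀ z : B, cnt (fun v => FC v = 0 ∧ FB v = z)
        = if (∃ v, FB v = z ∧ FC v = 0) then kBC else 0 := by
      intro z
      by_cases hw : ∃ v, FB v = z ∧ FC v = 0
      · obtain ⟨v0, h1, h3⟩ := hw
        rw [if_pos ⟨v0, h1, h3⟩]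
        rw [show kBC = cnt (fun v => FB v = FB v0 ∧ FC v = FC v0) from
          (by rw [cnt_translate2 FB FC hB hC v0])]
        exact cnt_congr fun v => by rw [h1, h3]; tauto
      · rw [if_neg hw]
        exact cnt_eq_zero fun v hv => hw ⟨v, hv.2, hv.1⟩
    rw [Finset.sum_congr rfl (fun z _ => step z), Finset.sum_ite, Finset.sum_const,
      Finset.sum_const_zero, add_zero, smul_eq_mul]
    congr 1
    rw [hnB, cnt_filter]
  have hnAne : nA ≠ 0 := fun hh => hkCne (by rw [hA1, hh, zero_mul])
  have hnBne : nB ≠ 0 := fun hh => hkCne (by rw [hB1, hh, zero_mul])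
  have key : kAC * kBC = kABC * kC := by
    have h2 : nA * nB * (kAC * kBC) = nA * nB * (kABC * kC) := by
      calc nA * nB * (kAC * kBC) = (nA * kAC) * (nB * kBC) := by ring
        _ = kC * kC := by rw [← hA1, ← hB1]
        _ = (nA * nB * kABC) * kC := by rw [← hC1]
        _ = nA * nB * (kABC * kC) := by ring
    exact Nat.eq_of_mul_eq_mul_left (Nat.pos_of_ne_zero (by
      simp [Nat.mul_eq_zero, hnAne, hnBne])) h2
  intro a b c
  by_cases hw : ∃ v, FA v = a ∧ FB v = b ∧ FC v = c
  · obtain ⟨v0, h1, h2, h3⟩ := hw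
    have eABC : cnt (fun v => FA v = a ∧ FB v = b ∧ FC v = c) = kABC := by
      rw [show (fun v => FA v = a ∧ FB v = b ∧ FC v = c)
          = (fun v => FA v = FA v0 ∧ FB v = FB v0 ∧ FC v = FC v0) from
        (by funext v; rw [h1, h2, h3]), cnt_translate3 FA FB FC hA hB hC v0]
    have eC : cnt (fun v : V => FC v = c) = kC := by
      rw [show (fun v : V => FC v = c) = (fun v => FC v = FC v0) from (by funext v; rw [h3]),
        cnt_translate FC hC v0]
    have eAC : cnt (fun v => FA v = a ∧ FC v = c) = kAC := by
      rw [show (fun v => FA v = a ∧ FC v = c) = (fun v => FA v = FA v0 ∧ FC v = FC v0) from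
        (by funext v; rw [h1, h3]), cnt_translate2 FA FC hA hC v0]
    have eBC : cnt (fun v => FB v = b ∧ FC v = c) = kBC := by
      rw [show (fun v => FB v = b ∧ FC v = c) = (fun v => FB v = FB v0 ∧ FC v = FC v0) from
        (by funext v; rw [h2, h3]), cnt_translate2 FB FC hB hC v0]
    rw [eABC, eC, eAC, eBC, key]
  · have eABC : cnt (fun v => FA v = a ∧ FB v = b ∧ FC v = c) = 0 :=
      cnt_eq_zero fun v hv => hw ⟨v, hv⟩
    rw [eABC, zero_mul]
    by_cases hAw : ∃ v, FA v = a ∧ FC v = c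
    · by_cases hBw : ∃ v, FB v = b ∧ FC v = c
      · exfalso
        obtain ⟨v1, e1, e3⟩ := hAw
        obtain ⟨v2, e2, e4⟩ := hBw
        obtain ⟨v, f1, f2, f3⟩ := R v1 v2 (by rw [e3, e4])
        exact hw ⟨v, by rw [f1, e1], by rw [f2, e2], by rw [f3, e3]⟩
      · rw [cnt_eq_zero (p := fun v => FB v = b ∧ FC v = c) fun v hv => hBw ⟨v, hv⟩, mul_zero]
    · rw [cnt_eq_zero (p := fun v => FA v = a ∧ FC v = c) fun v hv => hAw ⟨v, hv⟩, zero_mul]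

end CountFactor

open Real in


lemma sum3_cancel {A B C : Type*} [Fintype A] [Fintype B] [Fintype C]
    (f1 f2 f3 f4 : A → B → C → ℝ)
    (h : ∀ a b c, f1 a b c + f2 a b c - (f3 a b c + f4 a b c) = 0) :
    (∑ a, ∑ b, ∑ c, f1 a b c) + (∑ a, ∑ b, ∑ c, f2 a b c)
      - ((∑ a, ∑ b, ∑ c, f3 a b c) + (∑ a, ∑ b, ∑ c, f4 a b c)) = 0 := by
  have e : (∑ a, ∑ b, ∑ c, f1 a b c) + (∑ a, ∑ b, ∑ c, f2 a b c)
      - ((∑ a, ∑ b, ∑ c, f3 a b c) + (∑ a, ∑ b, ∑ c, f4 a b c))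
      = ∑ a, ∑ b, ∑ c, (f1 a b c + f2 a b c - (f3 a b c + f4 a b c)) := by
    simp [Finset.sum_add_distrib, Finset.sum_sub_distrib]
  rw [e]
  simp [h]

theorem entropy_fac {A B C : Type*} [Fintype A] [Fintype B] [Fintype C]
    (p : A → B → C → ℝ) (hp : ∀ a b c, 0 ≤ p a b c)
    (hfac : ∀ a b c, p a b c * (∑ a', ∑ b', p a' b' c)
      = (∑ b', p a b' c) * (∑ a', p a' b c)) :
    ((∑ a, ∑ c, Real.negMulLog (∑ b, p a b c)) + (∑ b, ∑ c, Real.negMulLog (∑ a, p a b c)))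
      - ((∑ a, ∑ b, ∑ c, Real.negMulLog (p a b c))
          + (∑ c, Real.negMulLog (∑ a, ∑ b, p a b c))) = 0 := by
  have key : ∀ a b c, (-(p a b c * Real.log (∑ b', p a b' c)))
      + (-(p a b c * Real.log (∑ a', p a' b c)))
      - ((-(p a b c * Real.log (p a b c)))
          + (-(p a b c * Real.log (∑ a', ∑ b', p a' b' c)))) = 0 := by
    intro a b c
    rcases eq_or_lt_of_le (hp a b c) with h0 | hpos
    · rw [← h0]; ring
    · have hAC : 0 < ∑ b', p a b' c :=
        lt_of_lt_of_le hpos (Finset.single_le_sum (fun b' _ => hp a b' c) (mem_univ b))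
      have hBC : 0 < ∑ a', p a' b c :=
        lt_of_lt_of_le hpos (Finset.single_le_sum (fun a' _ => hp a' b c) (mem_univ a))
      have hC : 0 < ∑ a', ∑ b', p a' b' c :=
        lt_of_lt_of_le hAC (Finset.single_le_sum
          (fun a' _ => Finset.sum_nonneg (fun b' _ => hp a' b' c)) (mem_univ a))
      have hlog : Real.log (p a b c) + Real.log (∑ a', ∑ b', p a' b' c)
          = Real.log (∑ b', p a b' c) + Real.log (∑ a', p a' b c) := by
        rw [← Real.log_mul hpos.ne' hC.ne', ← Real.log_mul hAC.ne' hBC.ne', hfac a b c]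
      linear_combination (p a b c) * hlog
  have e1 : (∑ a, ∑ c, Real.negMulLog (∑ b, p a b c))
      = ∑ a, ∑ b, ∑ c, -(p a b c * Real.log (∑ b', p a b' c)) := by
    refine Finset.sum_congr rfl fun a _ => ?_
    rw [Finset.sum_comm]
    refine Finset.sum_congr rfl fun c _ => ?_
    rw [Real.negMulLog, neg_mul, Finset.sum_neg_distrib, ← Finset.sum_mul]
  have e2 : (∑ b, ∑ c, Real.negMulLog (∑ a, p a b c))
      = ∑ a, ∑ b, ∑ c, -(p a b c * Real.log (∑ a', p a' b c)) := by
    have inner : (∑ b, ∑ c, Real.negMulLog (∑ a, p a b c))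
        = ∑ b, ∑ c, ∑ a, -(p a b c * Real.log (∑ a', p a' b c)) := by
      refine Finset.sum_congr rfl fun b _ => Finset.sum_congr rfl fun c _ => ?_
      rw [Real.negMulLog, neg_mul, Finset.sum_neg_distrib, ← Finset.sum_mul]
    rw [inner, show (∑ b, ∑ c, ∑ a, -(p a b c * Real.log (∑ a', p a' b c)))
        = ∑ b, ∑ a, ∑ c, -(p a b c * Real.log (∑ a', p a' b c)) from
      Finset.sum_congr rfl fun b _ => Finset.sum_comm, Finset.sum_comm]
  have e3 : (∑ a, ∑ b, ∑ c, Real.negMulLog (p a b c))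
      = ∑ a, ∑ b, ∑ c, -(p a b c * Real.log (p a b c)) := by
    simp [Real.negMulLog, neg_mul]
  have e4 : (∑ c, Real.negMulLog (∑ a, ∑ b, p a b c))
      = ∑ a, ∑ b, ∑ c, -(p a b c * Real.log (∑ a', ∑ b', p a' b' c)) := by
    have inner : (∑ c, Real.negMulLog (∑ a, ∑ b, p a b c))
        = ∑ c, ∑ a, ∑ b, -(p a b c * Real.log (∑ a', ∑ b', p a' b' c)) := by
      refine Finset.sum_congr rfl fun c _ => ?_
      rw [Real.negMulLog, neg_mul]
      simp only [Finset.sum_neg_distrib, ← Finset.sum_mul]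
    rw [inner, Finset.sum_comm]
    exact Finset.sum_congr rfl fun a _ => Finset.sum_comm
  rw [e1, e2, e3, e4]
  exact sum3_cancel _ _ _ _ key

section Bridge

variable {Ω : Type*} [MeasurableSpace Ω] (μ : Measure Ω)
  {V : Type*} [Fintype V] [MeasurableSpace V] [DiscreteMeasurableSpace V]
  (U : Ω → V)
  {α : Type*} [Fintype α] [MeasurableSpace α] [DiscreteMeasurableSpace α]
  (F : V → α)

lemma map_point (hU : Measurable U)
    (hUnif : ∀ v : V, μ (U ⁻¹' {v}) = (Fintype.card V : ENNReal)⁻¹) (a : α) : (μ.map (fun ω => F (U ω))) {a}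
    = (cnt (fun v => F v = a) : ENNReal) * (Fintype.card V : ENNReal)⁻¹ := by
  classical
  have hF : Measurable F := measurable_of_countable F
  have hFU : Measurable fun ω => F (U ω) := hF.comp hU
  rw [Measure.map_apply hFU (MeasurableSet.of_discrete)]
  have hpre : (fun ω => F (U ω)) ⁻¹' {a}
      = ⋃ v ∈ (Finset.univ.filter fun v => F v = a), U ⁻¹' {v} := by
    ext ω; simp
  rw [hpre, measure_biUnion_finset ?_ (fun v _ => hU MeasurableSet.of_discrete)]
  · rw [Finset.sum_congr rfl (fun v _ => hUnif v), Finset.sum_const, cnt_filter,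
      nsmul_eq_mul]
  · intro x _ y _ hxy
    exact Set.disjoint_iff_inter_eq_empty.mpr (by
      ext ω
      simp only [Set.mem_inter_iff, Set.mem_preimage, Set.mem_singleton_iff,
        Set.mem_empty_iff_false, iff_false, not_and]
      intro h1 h2
      exact hxy (h1 ▸ h2 ▸ rfl))

end Bridge


section BridgeEntr

lemma entr_cnt {Ω : Type*} [MeasurableSpace Ω] (μ : Measure Ω)
    {V : Type*} [Fintype V] [MeasurableSpace V] [DiscreteMeasurableSpace V]
    (U : Ω → V)
    {α : Type*} [Fintype α] [MeasurableSpace α] [DiscreteMeasurableSpace α]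
    (F : V → α) (hU : Measurable U)
    (hUnif : ∀ v : V, μ (U ⁻¹' {v}) = (Fintype.card V : ENNReal)⁻¹) :
    entr μ (fun ω => F (U ω)) = ∑ a : α, Real.negMulLog
      ((cnt (fun v => F v = a) : ℝ) * ((Fintype.card V : ℝ))⁻¹) := by
  unfold entr
  refine Finset.sum_congr rfl fun a _ => ?_
  rw [map_point μ U F hU hUnif a, ENNReal.toReal_mul, ENNReal.toReal_inv,
    ENNReal.toReal_natCast, ENNReal.toReal_natCast]

theorem condMI_zero {Ω : Type*} [MeasurableSpace Ω] (μ : Measure Ω) [IsProbabilityMeasure μ]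
    {V : Type*} [Fintype V] [AddCommGroup V] [MeasurableSpace V] [DiscreteMeasurableSpace V]
    {α β γ : Type*} [Fintype α] [AddCommGroup α] [MeasurableSpace α] [DiscreteMeasurableSpace α]
    [Fintype β] [AddCommGroup β] [MeasurableSpace β] [DiscreteMeasurableSpace β]
    [Fintype γ] [AddCommGroup γ] [MeasurableSpace γ] [DiscreteMeasurableSpace γ]
    (U : Ω → V) (hU : Measurable U)
    (hUnif : ∀ v : V, μ (U ⁻¹' {v}) = (Fintype.card V : ENNReal)⁻¹)
    (FA : V → α) (FB : V → β) (FC : V → γ)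
    (hA : ∀ x y, FA (x + y) = FA x + FA y) (hB : ∀ x y, FB (x + y) = FB x + FB y)
    (hC : ∀ x y, FC (x + y) = FC x + FC y)
    (R : ∀ v1 v2, FC v1 = FC v2 → ∃ v, FA v = FA v1 ∧ FB v = FB v2 ∧ FC v = FC v1) :
    condMI μ (fun ω => FA (U ω)) (fun ω => FB (U ω)) (fun ω => FC (U ω)) = 0 := by
  classical
  set N : ℝ := (Fintype.card V : ℝ) with hN
  set p : α → β → γ → ℝ := fun a b c =>
    (cnt (fun v => FA v = a ∧ FB v = b ∧ FC v = c) : ℝ) * N⁻¹ with hp_def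
  have hp : ∀ a b c, 0 ≤ p a b c := fun a b c => by
    rw [hp_def]
    positivity
  have hmAC : ∀ a c, (cnt (fun v => FA v = a ∧ FC v = c) : ℝ) * N⁻¹ = ∑ b, p a b c := by
    intro a c
    rw [cnt_partition FB (fun v => FA v = a ∧ FC v = c)]
    push_cast
    rw [Finset.sum_mul]
    exact Finset.sum_congr rfl fun b _ =>
      congrArg (fun n : ℕ => (n : ℝ) * N⁻¹) (cnt_congr fun v => by tauto)
  have hmBC : ∀ b c, (cnt (fun v => FB v = b ∧ FC v = c) : ℝ) * N⁻¹ = ∑ a, p a b c := by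
    intro b c
    rw [cnt_partition FA (fun v => FB v = b ∧ FC v = c)]
    push_cast
    rw [Finset.sum_mul]
    exact Finset.sum_congr rfl fun a _ =>
      congrArg (fun n : ℕ => (n : ℝ) * N⁻¹) (cnt_congr fun v => by tauto)
  have hmC : ∀ c, (cnt (fun v : V => FC v = c) : ℝ) * N⁻¹ = ∑ a, ∑ b, p a b c := by
    intro c
    rw [cnt_partition (fun v => (FA v, FB v)) (fun v : V => FC v = c)]
    push_cast
    rw [Finset.sum_mul, Fintype.sum_prod_type]
    exact Finset.sum_congr rfl fun a _ => Finset.sum_congr rfl fun b _ =>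
      congrArg (fun n : ℕ => (n : ℝ) * N⁻¹) (cnt_congr fun v => by
        rw [Prod.mk.injEq]; tauto)
  have hfac : ∀ a b c, p a b c * (∑ a', ∑ b', p a' b' c)
      = (∑ b', p a b' c) * (∑ a', p a' b c) := by
    intro a b c
    rw [← hmAC, ← hmBC, ← hmC]
    have hnat := count_factor FA FB FC hA hB hC R a b c
    have hcast := congrArg (fun n : ℕ => (n : ℝ)) hnat
    push_cast at hcast
    rw [hp_def]
    linear_combination (N⁻¹ * N⁻¹) * hcast
  have hEAC : entr μ (fun ω => (FA (U ω), FC (U ω)))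
      = ∑ a, ∑ c, Real.negMulLog (∑ b, p a b c) := by
    have := entr_cnt μ U (fun v => (FA v, FC v)) hU hUnif
    rw [show entr μ (fun ω => (FA (U ω), FC (U ω)))
        = entr μ (fun ω => (fun v => (FA v, FC v)) (U ω)) from rfl, this,
      Fintype.sum_prod_type]
    refine Finset.sum_congr rfl fun a _ => Finset.sum_congr rfl fun c _ => ?_
    rw [← hmAC]
    exact congrArg Real.negMulLog (congrArg (fun n : ℕ => (n : ℝ) * N⁻¹)
      (cnt_congr fun v => by rw [Prod.mk.injEq]))
  have hEBC : entr μ (fun ω => (FB (U ω), FC (U ω)))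
      = ∑ b, ∑ c, Real.negMulLog (∑ a, p a b c) := by
    have := entr_cnt μ U (fun v => (FB v, FC v)) hU hUnif
    rw [show entr μ (fun ω => (FB (U ω), FC (U ω)))
        = entr μ (fun ω => (fun v => (FB v, FC v)) (U ω)) from rfl, this,
      Fintype.sum_prod_type]
    refine Finset.sum_congr rfl fun b _ => Finset.sum_congr rfl fun c _ => ?_
    rw [← hmBC]
    exact congrArg Real.negMulLog (congrArg (fun n : ℕ => (n : ℝ) * N⁻¹)
      (cnt_congr fun v => by rw [Prod.mk.injEq]))
  have hEABC : entr μ (fun ω => ((FA (U ω), FB (U ω)), FC (U ω)))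
      = ∑ a, ∑ b, ∑ c, Real.negMulLog (p a b c) := by
    have := entr_cnt μ U (fun v => ((FA v, FB v), FC v)) hU hUnif
    rw [show entr μ (fun ω => ((FA (U ω), FB (U ω)), FC (U ω)))
        = entr μ (fun ω => (fun v => ((FA v, FB v), FC v)) (U ω)) from rfl, this,
      Fintype.sum_prod_type, Fintype.sum_prod_type]
    refine Finset.sum_congr rfl fun a _ => Finset.sum_congr rfl fun b _ =>
      Finset.sum_congr rfl fun c _ => ?_
    rw [hp_def]
    exact congrArg Real.negMulLog (congrArg (fun n : ℕ => (n : ℝ) * N⁻¹)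
      (cnt_congr fun v => by rw [Prod.mk.injEq, Prod.mk.injEq, and_assoc]))
  have hEC : entr μ (fun ω => FC (U ω))
      = ∑ c, Real.negMulLog (∑ a, ∑ b, p a b c) := by
    rw [entr_cnt μ U FC hU hUnif]
    exact Finset.sum_congr rfl fun c _ => by rw [← hmC]
  unfold condMI condEntr
  simp only []
  rw [hEAC, hEBC, hEABC, hEC]
  have := entropy_fac p hp hfac
  linarith

end BridgeEntr

lemma sum_ind {q : ℕ} (m n : ℕ) :
    (∑ j : Fin m, (if (j : ℕ) = n then (1 : ZMod q) else 0)) = if n < m then 1 else 0 := by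
  by_cases hn : n < m
  · rw [if_pos hn, Fintype.sum_eq_single (⟨n, hn⟩ : Fin m)]
    · simp
    · intro j hj
      rw [if_neg]
      intro hc
      exact hj (Fin.ext hc)
  · rw [if_neg hn]
    apply Finset.sum_eq_zero
    intro j _
    rw [if_neg]
    have := j.2
    omega

lemma sum_ind' {q : ℕ} (m n : ℕ) :
    (∑ j : Fin m, (if n = (j : ℕ) then (1 : ZMod q) else 0)) = if n < m then 1 else 0 := by
  rw [← sum_ind m n]
  exact Finset.sum_congr rfl fun j _ => if_congr eq_comm rfl rfl

section Surj

variable {q K : ℕ} [NeZero q] {Gbar : Finset (Finset (Fin K))}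
  (T : Finset (Fin K))
  (h : ∀ g : {g : Finset (Fin K) // g ∈ Gbar}, Fin K → (Fin (g.1.card - 1) → ZMod q))

/-- delta function -/
def dlt (u : Fin K) : Fin K → ZMod q := fun k => if k = u then 1 else 0

/-- realizable vectors -/
def Pd (d : Fin K → ZMod q) : Prop :=
  ∃ t : ∀ g : {g : Finset (Fin K) // g ∈ Gbar}, Fin (g.1.card - 1) → ZMod q,
    (∀ g, (g.1 ∩ T).Nonempty → t g = 0) ∧
    ∀ k, (∑ g, ∑ j, h g k j * t g j) = d k

lemma Pd_zero : Pd T h 0 :=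
  ⟨fun _ => 0, fun _ _ => rfl, fun k => by simp⟩

lemma Pd_add {d1 d2 : Fin K → ZMod q} (h1 : Pd T h d1) (h2 : Pd T h d2) :
    Pd T h (d1 + d2) := by
  obtain ⟨t1, ht1, he1⟩ := h1
  obtain ⟨t2, ht2, he2⟩ := h2
  refine ⟨t1 + t2, fun g hg => by simp [Pi.add_apply, ht1 g hg, ht2 g hg], fun k => ?_⟩
  have : ∀ g : {g : Finset (Fin K) // g ∈ Gbar}, ∀ j, h g k j * (t1 + t2) g j
      = h g k j * t1 g j + h g k j * t2 g j := fun g j => by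
    simp [Pi.add_apply, mul_add]
  simp_rw [this, Finset.sum_add_distrib]
  rw [he1 k, he2 k]
  rfl

lemma Pd_smul {d : Fin K → ZMod q} (c : ZMod q) (hd : Pd T h d) : Pd T h (c • d) := by
  obtain ⟨t, ht, he⟩ := hd
  refine ⟨c • t, fun g hg => by simp [Pi.smul_apply, ht g hg], fun k => ?_⟩
  have : ∀ g : {g : Finset (Fin K) // g ∈ Gbar}, ∀ j, h g k j * (c • t) g j
      = c * (h g k j * t g j) := fun g j => by
    simp [Pi.smul_apply, smul_eq_mul]; ring
  simp_rw [this, ← Finset.mul_sum]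
  rw [he k]
  rfl

variable (enum : ∀ g : {g : Finset (Fin K) // g ∈ Gbar}, Fin g.1.card ≃ {k : Fin K // k ∈ g.1})

lemma Pd_edge (hG2 : ∀ g ∈ Gbar, 2 ≤ g.card)
    (hzero : ∀ (g) (k), k ∉ g.1 → h g k = 0)
    (hbasis : ∀ (g) (i : Fin g.1.card), (i : ℕ) < g.1.card - 1 →
      h g (enum g i).1 = fun (j : Fin (g.1.card - 1)) =>
        if (j : ℕ) = (i : ℕ) then (1 : ZMod q) else 0)
    (hlast : ∀ (g) (i : Fin g.1.card), (i : ℕ) = g.1.card - 1 →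
      h g (enum g i).1 = fun _ => -1)
    (g : {g : Finset (Fin K) // g ∈ Gbar}) (hgT : g.1 ∩ T = ∅)
    (u v : Fin K) (hu : u ∈ g.1) (hv : v ∈ g.1) :
    Pd T h (dlt u - dlt v) := by
  classical
  have hc2 : 2 ≤ g.1.card := hG2 g.1 g.2
  set m := g.1.card - 1 with hm
  set a : Fin g.1.card := (enum g).symm ⟨u, hu⟩ with ha
  set b : Fin g.1.card := (enum g).symm ⟨v, hv⟩ with hb
  set tg : Fin m → ZMod q := fun j =>
    (if (j : ℕ) = (a : ℕ) then 1 else 0) - (if (j : ℕ) = (b : ℕ) then 1 else 0) with htg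
  refine ⟨Function.update (fun _ => 0) g tg, ?_, ?_⟩
  · intro g' hg'
    by_cases hgg : g' = g
    · subst hgg
      rw [hgT] at hg'
      exact absurd hg' (by simp)
    · rw [Function.update_of_ne hgg]
  · intro k
    rw [Fintype.sum_eq_single g (fun g' hne => by
      rw [Function.update_of_ne hne]; simp)]
    rw [Function.update_self]
    by_cases hk : k ∈ g.1
    · set i : Fin g.1.card := (enum g).symm ⟨k, hk⟩ with hi
      have hik : ((enum g) i).1 = k := by rw [hi, Equiv.apply_symm_apply]
      have hi_le : (i : ℕ) ≤ m := by
        have := i.2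
        omega
      have hku : (k = u) ↔ ((i : ℕ) = (a : ℕ)) := by
        constructor
        · intro e
          have : (⟨k, hk⟩ : {x // x ∈ g.1}) = ⟨u, hu⟩ := Subtype.ext e
          rw [hi, ha, this]
        · intro e
          have : i = a := Fin.ext e
          have h2 : (⟨k, hk⟩ : {x // x ∈ g.1}) = ⟨u, hu⟩ := by
            have := congrArg (enum g) this
            rwa [hi, ha, Equiv.apply_symm_apply, Equiv.apply_symm_apply] at this
          exact congrArg Subtype.val h2
      have hkv : (k = v) ↔ ((i : ℕ) = (b : ℕ)) := by
        constructor
        · intro e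
          have : (⟨k, hk⟩ : {x // x ∈ g.1}) = ⟨v, hv⟩ := Subtype.ext e
          rw [hi, hb, this]
        · intro e
          have : i = b := Fin.ext e
          have h2 : (⟨k, hk⟩ : {x // x ∈ g.1}) = ⟨v, hv⟩ := by
            have := congrArg (enum g) this
            rwa [hi, hb, Equiv.apply_symm_apply, Equiv.apply_symm_apply] at this
          exact congrArg Subtype.val h2
      have ha_le : (a : ℕ) ≤ m := by have := a.2; omega
      have hb_le : (b : ℕ) ≤ m := by have := b.2; omega
      have hdu : ∀ P : Prop, ∀ _ : Decidable P, ((k = u) ↔ P) →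
          dlt (q := q) u k = (if P then (1 : ZMod q) else 0) := by
        intro P hP hiff
        unfold dlt
        by_cases e : k = u
        · rw [if_pos e, if_pos (hiff.mp e)]
        · rw [if_neg e, if_neg (fun hc => e (hiff.mpr hc))]
      have hdv : ∀ P : Prop, ∀ _ : Decidable P, ((k = v) ↔ P) →
          dlt (q := q) v k = (if P then (1 : ZMod q) else 0) := by
        intro P hP hiff
        unfold dlt
        by_cases e : k = v
        · rw [if_pos e, if_pos (hiff.mp e)]
        · rw [if_neg e, if_neg (fun hc => e (hiff.mpr hc))]
      rcases lt_or_eq_of_le hi_le with him | him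
      · have hh := hbasis g i (by omega)
        rw [hik] at hh
        rw [hh]
        rw [Fintype.sum_eq_single (⟨(i : ℕ), him⟩ : Fin m) (fun j hj => by
          show (if ((j : ℕ) = (i : ℕ)) then (1 : ZMod q) else 0) * tg j = 0
          rw [if_neg (fun hc => hj (Fin.ext hc)), zero_mul])]
        show (if ((i : ℕ) = (i : ℕ)) then (1 : ZMod q) else 0)
            * ((if ((i : ℕ) = (a : ℕ)) then (1 : ZMod q) else 0)
              - (if ((i : ℕ) = (b : ℕ)) then (1 : ZMod q) else 0)) = dlt u k - dlt v k
        rw [if_pos rfl, one_mul, hdu _ inferInstance hku, hdv _ inferInstance hkv]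
      · have hh := hlast g i him
        rw [hik] at hh
        rw [hh]
        have hsum : (∑ j : Fin m, (-1 : ZMod q) * tg j)
            = -((if (a : ℕ) < m then (1 : ZMod q) else 0)
                - (if (b : ℕ) < m then (1 : ZMod q) else 0)) := by
          simp_rw [neg_one_mul, htg]
          rw [Finset.sum_neg_distrib, Finset.sum_sub_distrib, sum_ind, sum_ind]
        show (∑ j : Fin m, (-1 : ZMod q) * tg j) = dlt u k - dlt v k
        rw [hsum, hdu ((a : ℕ) = m) inferInstance (hku.trans (by omega)),
          hdv ((b : ℕ) = m) inferInstance (hkv.trans (by omega))]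
        rcases lt_or_eq_of_le ha_le with h1 | h1 <;> rcases lt_or_eq_of_le hb_le with h2 | h2
        · rw [if_pos h1, if_pos h2, if_neg (by omega), if_neg (by omega)]; ring
        · rw [if_pos h1, if_neg (by omega), if_neg (by omega), if_pos h2]; ring
        · rw [if_neg (by omega), if_pos h2, if_pos h1, if_neg (by omega)]; ring
        · rw [if_neg (by omega), if_neg (by omega), if_pos h1, if_pos h2]; ring
    · rw [hzero g k hk]
      have h1 : k ≠ u := fun e => hk (e ▸ hu)
      have h2 : k ≠ v := fun e => hk (e ▸ hv)
      show _ = dlt (q := q) u k - dlt (q := q) v k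
      simp [dlt, h1, h2]

lemma Pd_reach (hG2 : ∀ g ∈ Gbar, 2 ≤ g.card)
    (hzero : ∀ (g) (k), k ∉ g.1 → h g k = 0)
    (hbasis : ∀ (g) (i : Fin g.1.card), (i : ℕ) < g.1.card - 1 →
      h g (enum g i).1 = fun (j : Fin (g.1.card - 1)) =>
        if (j : ℕ) = (i : ℕ) then (1 : ZMod q) else 0)
    (hlast : ∀ (g) (i : Fin g.1.card), (i : ℕ) = g.1.card - 1 →
      h g (enum g i).1 = fun _ => -1)
    (hconn : ∀ V1 : Finset (Fin K), V1 ⊆ Tᶜ → V1.Nonempty → (Tᶜ \ V1).Nonempty →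
      ∃ g ∈ Gbar, g ∩ T = ∅ ∧ (g ∩ V1).Nonempty ∧ (g ∩ (Tᶜ \ V1)).Nonempty)
    (u : Fin K) (hu : u ∈ Tᶜ) :
    ∀ v ∈ (Tᶜ : Finset (Fin K)), Pd T h (dlt u - dlt v) := by
  classical
  set V1 : Finset (Fin K) := Tᶜ.filter (fun k => Pd T h (dlt u - dlt k)) with hV1
  have huV1 : u ∈ V1 := by
    rw [hV1, Finset.mem_filter]
    exact ⟨hu, by rw [sub_self]; exact Pd_zero T h⟩
  have hsub : V1 ⊆ Tᶜ := Finset.filter_subset _ _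
  have hempty : Tᶜ \ V1 = ∅ := by
    by_contra hne
    obtain ⟨g, hgG, hgT, ⟨x, hx⟩, ⟨y, hy⟩⟩ := hconn V1 hsub ⟨u, huV1⟩
      (Finset.nonempty_iff_ne_empty.mpr hne)
    rw [Finset.mem_inter] at hx hy
    have hxV1 := hx.2
    rw [hV1, Finset.mem_filter] at hxV1
    have hPxy : Pd T h (dlt x - dlt y) :=
      Pd_edge T h enum hG2 hzero hbasis hlast ⟨g, hgG⟩ hgT x y hx.1 hy.1
    have hPuy : Pd T h (dlt u - dlt y) := by
      have := Pd_add T h hxV1.2 hPxy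
      rwa [show (dlt (q := q) u - dlt x) + (dlt x - dlt y) = dlt u - dlt y by ring] at this
    have hyV1 : y ∈ V1 := by
      rw [hV1, Finset.mem_filter]
      exact ⟨(Finset.mem_sdiff.mp hy.2).1, hPuy⟩
    exact (Finset.mem_sdiff.mp hy.2).2 hyV1
  intro v hv
  have : v ∈ V1 := by
    by_contra hvn
    have : v ∈ Tᶜ \ V1 := Finset.mem_sdiff.mpr ⟨hv, hvn⟩
    rw [hempty] at this
    exact absurd this (by simp)
  rw [hV1, Finset.mem_filter] at this
  exact this.2

lemma Pd_surj (hG2 : ∀ g ∈ Gbar, 2 ≤ g.card)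
    (hzero : ∀ (g) (k), k ∉ g.1 → h g k = 0)
    (hbasis : ∀ (g) (i : Fin g.1.card), (i : ℕ) < g.1.card - 1 →
      h g (enum g i).1 = fun (j : Fin (g.1.card - 1)) =>
        if (j : ℕ) = (i : ℕ) then (1 : ZMod q) else 0)
    (hlast : ∀ (g) (i : Fin g.1.card), (i : ℕ) = g.1.card - 1 →
      h g (enum g i).1 = fun _ => -1)
    (hconn : ∀ V1 : Finset (Fin K), V1 ⊆ Tᶜ → V1.Nonempty → (Tᶜ \ V1).Nonempty →
      ∃ g ∈ Gbar, g ∩ T = ∅ ∧ (g ∩ V1).Nonempty ∧ (g ∩ (Tᶜ \ V1)).Nonempty)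
    (d : Fin K → ZMod q) (hdT : ∀ k ∈ T, d k = 0) (hdsum : (∑ k, d k) = 0) :
    Pd T h d := by
  classical
  by_cases hTc : (Tᶜ : Finset (Fin K)).Nonempty
  · obtain ⟨u, hu⟩ := hTc
    have hrep : d = ∑ v ∈ (Tᶜ : Finset (Fin K)), (d v) • (dlt (q := q) v - dlt u) := by
      funext k
      rw [Finset.sum_apply]
      have hterm : ∀ v, ((d v • (dlt (q := q) v - dlt u) : Fin K → ZMod q)) k
          = d v * dlt v k - d v * dlt u k := fun v => mul_sub _ _ _
      simp_rw [hterm]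
      rw [Finset.sum_sub_distrib, ← Finset.sum_mul]
      have hsc : (∑ v ∈ (Tᶜ : Finset (Fin K)), d v) = 0 := by
        have := Finset.sum_add_sum_compl T d
        have hT0 : (∑ v ∈ T, d v) = 0 := Finset.sum_eq_zero (fun v hv => hdT v hv)
        rw [hT0, zero_add] at this
        rw [this, hdsum]
      rw [hsc, zero_mul, sub_zero]
      have : ∀ v, d v * dlt (q := q) v k = if v = k then d v else 0 := by
        intro v
        unfold dlt
        by_cases e : k = v
        · rw [if_pos e, if_pos e.symm, mul_one]
        · rw [if_neg e, if_neg (fun hc => e hc.symm), mul_zero]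
      simp_rw [this]
      rw [Finset.sum_ite_eq' (Tᶜ : Finset (Fin K)) k d]
      by_cases hk : k ∈ (Tᶜ : Finset (Fin K))
      · rw [if_pos hk]
      · rw [if_neg hk]
        exact hdT k (by simpa using hk)
    rw [hrep]
    refine Finset.sum_induction _ _ (fun x y hx hy => Pd_add T h hx hy) (Pd_zero T h) ?_
    intro v hv
    apply Pd_smul
    have := Pd_reach T h enum hG2 hzero hbasis hlast hconn u hu v hv
    have h2 := Pd_smul T h (-1 : ZMod q) this
    rwa [show (-1 : ZMod q) • (dlt (q := q) u - dlt v) = dlt v - dlt u by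
      rw [neg_one_smul, neg_sub]] at h2
  · have hd0 : d = 0 := by
      funext k
      exact hdT k (by
        rw [Finset.not_nonempty_iff_eq_empty] at hTc
        have : k ∉ (Tᶜ : Finset (Fin K)) := by rw [hTc]; simp
        simpa using this)
    rw [hd0]
    exact Pd_zero T h

end Surj



section Scheme

variable (q K : ℕ) [NeZero q] (Gbar : Finset (Finset (Fin K)))

abbrev VS := (Fin K → ZMod q) × (∀ g : {g : Finset (Fin K) // g ∈ Gbar}, Fin (g.1.card - 1) → ZMod q)

def FAs : VS q K Gbar → (Fin K → ZMod q) := fun v => v.1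

variable (h : ∀ g : {g : Finset (Fin K) // g ∈ Gbar}, Fin K → (Fin (g.1.card - 1) → ZMod q))

def FBs : VS q K Gbar → (Fin K → ZMod q) :=
  fun v => fun k => v.1 k + ∑ g, ∑ j, h g k j * v.2 g j

variable (T : Finset (Fin K))

abbrev CS := (ZMod q) × (∀ k : {k : Fin K // k ∈ T}, (ZMod q) ×
  (∀ g : {g : Finset (Fin K) // g ∈ Gbar ∧ k.1 ∈ g}, Fin (g.1.card - 1) → ZMod q))

def FCs : VS q K Gbar → CS q K Gbar T := fun v =>
  (∑ k, v.1 k, fun k => (v.1 k.1, fun g => v.2 ⟨g.1, g.2.1⟩))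

lemma FAs_add : ∀ x y : VS q K Gbar, FAs q K Gbar (x + y) = FAs q K Gbar x + FAs q K Gbar y :=
  fun _ _ => rfl

lemma FBs_add : ∀ x y : VS q K Gbar, FBs q K Gbar h (x + y) = FBs q K Gbar h x + FBs q K Gbar h y := by
  intro x y
  funext k
  show (x.1 k + y.1 k) + (∑ g, ∑ j, h g k j * (x.2 g j + y.2 g j)) = _
  have e1 : ∀ g : {g : Finset (Fin K) // g ∈ Gbar}, ∀ j, h g k j * (x.2 g j + y.2 g j)
      = h g k j * x.2 g j + h g k j * y.2 g j := fun g j => mul_add _ _ _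
  simp_rw [e1, Finset.sum_add_distrib]
  show _ = (x.1 k + _) + (y.1 k + _)
  ring

lemma FCs_add : ∀ x y : VS q K Gbar, FCs q K Gbar T (x + y) = FCs q K Gbar T x + FCs q K Gbar T y := by
  intro x y
  refine Prod.ext_iff.mpr ⟨?_, rfl⟩
  show (∑ k, (x.1 k + y.1 k)) = (∑ k, x.1 k) + (∑ k, y.1 k)
  rw [Finset.sum_add_distrib]

lemma keyR (enum : ∀ g : {g : Finset (Fin K) // g ∈ Gbar}, Fin g.1.card ≃ {k : Fin K // k ∈ g.1})
    (hG2 : ∀ g ∈ Gbar, 2 ≤ g.card)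
    (hzero : ∀ (g) (k), k ∉ g.1 → h g k = 0)
    (hbasis : ∀ (g) (i : Fin g.1.card), (i : ℕ) < g.1.card - 1 →
      h g (enum g i).1 = fun (j : Fin (g.1.card - 1)) =>
        if (j : ℕ) = (i : ℕ) then (1 : ZMod q) else 0)
    (hlast : ∀ (g) (i : Fin g.1.card), (i : ℕ) = g.1.card - 1 →
      h g (enum g i).1 = fun _ => -1)
    (hconn : ∀ V1 : Finset (Fin K), V1 ⊆ Tᶜ → V1.Nonempty → (Tᶜ \ V1).Nonempty →
      ∃ g ∈ Gbar, g ∩ T = ∅ ∧ (g ∩ V1).Nonempty ∧ (g ∩ (Tᶜ \ V1)).Nonempty) :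
    ∀ v1 v2 : VS q K Gbar, FCs q K Gbar T v1 = FCs q K Gbar T v2 →
      ∃ v, FAs q K Gbar v = FAs q K Gbar v1 ∧ FBs q K Gbar h v = FBs q K Gbar h v2
        ∧ FCs q K Gbar T v = FCs q K Gbar T v1 := by
  intro v1 v2 hC
  have hsum : (∑ k, v1.1 k) = ∑ k, v2.1 k := congrArg Prod.fst hC
  have h2 := congrArg Prod.snd hC
  have hwT : ∀ k : Fin K, ∀ hk : k ∈ T, v1.1 k = v2.1 k := fun k hk =>
    congrArg Prod.fst (congrFun h2 ⟨k, hk⟩)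
  have hsT : ∀ g : {g : Finset (Fin K) // g ∈ Gbar}, (g.1 ∩ T).Nonempty →
      v1.2 g = v2.2 g := by
    rintro g ⟨k, hkmem⟩
    rw [Finset.mem_inter] at hkmem
    exact congrFun (congrArg Prod.snd (congrFun h2 ⟨k, hkmem.2⟩)) ⟨g.1, g.2, hkmem.1⟩
  set d : Fin K → ZMod q := fun k => v2.1 k - v1.1 k with hd
  have hdT : ∀ k ∈ T, d k = 0 := fun k hk => by
    rw [hd]
    simp [hwT k hk]
  have hdsum : (∑ k, d k) = 0 := by
    rw [hd, Finset.sum_sub_distrib, hsum, sub_self]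
  obtain ⟨t, htT, hteq⟩ := Pd_surj T h enum hG2 hzero hbasis hlast hconn d hdT hdsum
  refine ⟨(v1.1, fun g => v2.2 g + t g), rfl, ?_, ?_⟩
  · funext k
    have e1 : ∀ g : {g : Finset (Fin K) // g ∈ Gbar}, ∀ j, h g k j * (v2.2 g j + t g j)
        = h g k j * v2.2 g j + h g k j * t g j := fun _ _ => mul_add _ _ _
    calc v1.1 k + ∑ g, ∑ j, h g k j * (v2.2 g j + t g j)
        = v1.1 k + ((∑ g, ∑ j, h g k j * v2.2 g j) + (∑ g, ∑ j, h g k j * t g j)) := by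
          simp_rw [e1, Finset.sum_add_distrib]
      _ = v2.1 k + ∑ g, ∑ j, h g k j * v2.2 g j := by
          rw [hteq k]
          show v1.1 k + (_ + (v2.1 k - v1.1 k)) = _
          ring
  · refine Prod.ext_iff.mpr ⟨rfl, ?_⟩
    funext k
    refine Prod.ext_iff.mpr ⟨rfl, ?_⟩
    funext g'
    show v2.2 ⟨g'.1, g'.2.1⟩ + t ⟨g'.1, g'.2.1⟩ = v1.2 ⟨g'.1, g'.2.1⟩
    have hGT : ((⟨g'.1, g'.2.1⟩ : {g : Finset (Fin K) // g ∈ Gbar}).1 ∩ T).Nonempty :=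
      ⟨k.1, Finset.mem_inter.mpr ⟨g'.2.2, k.2⟩⟩
    rw [htT _ hGT, add_zero]
    exact (hsT _ hGT).symm

end Scheme

/-- the scalar zero-sum groupwise-key scheme
`X_k = W_k + Σ_{𝒢 ∋ k} h_𝒢^k · S_𝒢` is correct, and it is secure against every colluding
set `T` for which the key hypergraph restricted to `[K]∖T` (with edges the key groups
avoiding `T`) is connected. -/
theorem stmt15
    (q K : ℕ) [NeZero q] (hq : IsPrimePow q) (hK : 2 ≤ K)
    {Ω : Type*} [MeasurableSpace Ω] (μ : Measure Ω) [IsProbabilityMeasure μ]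
    (Gbar : Finset (Finset (Fin K))) (hG2 : ∀ g ∈ Gbar, 2 ≤ g.card)
    (W : Fin K → Ω → ZMod q)
    (S : ∀ g : {g : Finset (Fin K) // g ∈ Gbar}, Ω → (Fin (g.1.card - 1) → ZMod q))
    (hWmeas : ∀ k, Measurable (W k)) (hSmeas : ∀ g, Measurable (S g))
    (hWunif : ∀ k, IsUnif μ (W k)) (hSunif : ∀ g, IsUnif μ (S g))
    (hWindep : iIndepFun W μ)
    (hSindep : iIndepFun S μ)
    (hWSindep : IndepFun (fun ω => fun k => W k ω) (fun ω => fun g => S g ω) μ)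
    (enum : ∀ g : {g : Finset (Fin K) // g ∈ Gbar}, Fin g.1.card ≃ {k : Fin K // k ∈ g.1})
    (h : ∀ g : {g : Finset (Fin K) // g ∈ Gbar}, Fin K → (Fin (g.1.card - 1) → ZMod q))
    (hzero : ∀ (g) (k), k ∉ g.1 → h g k = 0)
    (hbasis : ∀ (g) (i : Fin g.1.card), (i : ℕ) < g.1.card - 1 →
      h g (enum g i).1 = fun (j : Fin (g.1.card - 1)) =>
        if (j : ℕ) = (i : ℕ) then (1 : ZMod q) else 0)
    (hlast : ∀ (g) (i : Fin g.1.card), (i : ℕ) = g.1.card - 1 →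
      h g (enum g i).1 = fun _ => -1)
    (X : Fin K → Ω → ZMod q)
    (hX : ∀ k, X k = fun ω =>
      W k ω + ∑ g : {g : Finset (Fin K) // g ∈ Gbar}, ∑ j, h g k j * S g ω j) :
    (∀ᵐ ω ∂μ, ∑ k, X k ω = ∑ k, W k ω) ∧
      ∀ T : Finset (Fin K),
        (∀ V1 : Finset (Fin K), V1 ⊆ Tᶜ → V1.Nonempty → (Tᶜ \ V1).Nonempty →
          ∃ g ∈ Gbar, g ∩ T = ∅ ∧ (g ∩ V1).Nonempty ∧ (g ∩ (Tᶜ \ V1)).Nonempty) →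
        condMI μ (fun ω => fun k => W k ω) (fun ω => fun k => X k ω)
          (fun ω => (∑ k, W k ω,
            fun k : {k : Fin K // k ∈ T} => (W k.1 ω,
              fun g : {g : Finset (Fin K) // g ∈ Gbar ∧ k.1 ∈ g} =>
                S ⟨g.1, g.2.1⟩ ω))) = 0 := by
  classical
  have hcol : ∀ (g : {g : Finset (Fin K) // g ∈ Gbar}) (j : Fin (g.1.card - 1)),
      (∑ k : Fin K, h g k j) = 0 := by
    intro g j
    have hc2 : 2 ≤ g.1.card := hG2 g.1 g.2
    have hstep1 : (∑ k : Fin K, h g k j) = ∑ k ∈ g.1, h g k j :=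
      (Finset.sum_subset (Finset.subset_univ g.1) (fun x _ hx => by
        rw [hzero g x hx]; rfl)).symm
    rw [hstep1, ← Finset.sum_attach g.1 (fun k => h g k j), ← Finset.univ_eq_attach,
      ← Equiv.sum_comp (enum g) (fun x => h g x.1 j)]
    have hterm : ∀ i : Fin g.1.card, h g ((enum g) i).1 j
        = (if (i : ℕ) = g.1.card - 1 then (-1 : ZMod q) else 0)
          + (if (j : ℕ) = (i : ℕ) then 1 else 0) := by
      intro i
      by_cases him : (i : ℕ) = g.1.card - 1
      · rw [hlast g i him, if_pos him, if_neg (by have := j.2; omega)]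
        norm_num
      · have hi2 := i.2
        rw [hbasis g i (by omega), if_neg him, zero_add]
    simp_rw [hterm]
    rw [Finset.sum_add_distrib, sum_ind']
    rw [Fintype.sum_eq_single (⟨g.1.card - 1, by omega⟩ : Fin g.1.card) (fun i hi =>
      if_neg (fun hc' => hi (Fin.ext (by simpa using hc'))))]
    rw [if_pos rfl, if_pos (by have := j.2; omega)]
    ring
  constructor
  · refine Filter.Eventually.of_forall (fun ω => ?_)
    simp only [hX]
    rw [Finset.sum_add_distrib]
    have hz : (∑ k, ∑ g : {g : Finset (Fin K) // g ∈ Gbar}, ∑ j, h g k j * S g ω j) = 0 := by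
      rw [Finset.sum_comm]
      refine Finset.sum_eq_zero fun g _ => ?_
      rw [Finset.sum_comm]
      refine Finset.sum_eq_zero fun j _ => ?_
      rw [← Finset.sum_mul, hcol g j, zero_mul]
    rw [hz, add_zero]
  · intro T hconn
    set U : Ω → VS q K Gbar := fun ω => (fun k => W k ω, fun g => S g ω) with hU_def
    have hU : Measurable U :=
      Measurable.prodMk (measurable_pi_lambda _ (fun k => hWmeas k))
        (measurable_pi_lambda _ (fun g => hSmeas g))
    have hWa : ∀ a : Fin K → ZMod q,
        μ ((fun ω => fun k => W k ω) ⁻¹' {a})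
          = (Fintype.card (Fin K → ZMod q) : ENNReal)⁻¹ := by
      intro a
      have hset : (fun ω => fun k => W k ω) ⁻¹' {a} = ⋂ k, (W k) ⁻¹' {a k} := by
        ext ω
        simp [Set.mem_iInter, funext_iff]
      rw [hset, hWindep.meas_iInter (fun k => ⟨{a k}, MeasurableSet.of_discrete, rfl⟩)]
      have hper : ∀ k : Fin K, μ ((W k) ⁻¹' {a k}) = (Fintype.card (ZMod q) : ENNReal)⁻¹ :=
        fun k => hWunif k (a k)
      simp_rw [hper]
      rw [Finset.prod_const, Finset.card_univ, Fintype.card_fin]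
      rw [show (Fintype.card (Fin K → ZMod q) : ENNReal)
          = (((Fintype.card (ZMod q)) ^ K : ℕ) : ENNReal) from by
        rw [Fintype.card_fun, Fintype.card_fin]]
      rw [Nat.cast_pow, ← ENNReal.inv_pow]
    have hSa : ∀ b : (∀ g : {g : Finset (Fin K) // g ∈ Gbar}, Fin (g.1.card - 1) → ZMod q),
        μ ((fun ω => fun g => S g ω) ⁻¹' {b})
          = (Fintype.card (∀ g : {g : Finset (Fin K) // g ∈ Gbar},
              Fin (g.1.card - 1) → ZMod q) : ENNReal)⁻¹ := by
      intro b
      have hset : (fun ω => fun g => S g ω) ⁻¹' {b} = ⋂ g, (S g) ⁻¹' {b g} := by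
        ext ω
        simp [Set.mem_iInter, funext_iff]
      rw [hset, hSindep.meas_iInter (fun g => ⟨{b g}, MeasurableSet.of_discrete, rfl⟩)]
      have hper : ∀ g : {g : Finset (Fin K) // g ∈ Gbar}, μ ((S g) ⁻¹' {b g})
          = ((Fintype.card (Fin (g.1.card - 1) → ZMod q) : ℕ) : ENNReal)⁻¹ :=
        fun g => hSunif g (b g)
      simp_rw [hper]
      rw [← ENNReal.prod_inv_distrib (fun x _ y _ => by
        exact fun _ => Or.inl (Nat.cast_ne_zero.mpr Fintype.card_ne_zero))]
      congr 1
      rw [← Nat.cast_prod]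
      congr 1
      rw [Fintype.card_pi]
    have hUnif : ∀ v : VS q K Gbar,
        μ (U ⁻¹' {v}) = (Fintype.card (VS q K Gbar) : ENNReal)⁻¹ := by
      intro v
      have hset : U ⁻¹' {v} = ((fun ω => fun k => W k ω) ⁻¹' {v.1})
          ∩ ((fun ω => fun g => S g ω) ⁻¹' {v.2}) := by
        ext ω
        simp [hU_def, Prod.ext_iff]
      rw [hset, hWSindep.measure_inter_preimage_eq_mul {v.1} {v.2}
        MeasurableSet.of_discrete MeasurableSet.of_discrete]
      rw [hWa v.1, hSa v.2]
      rw [← ENNReal.mul_inv (Or.inl (Nat.cast_ne_zero.mpr Fintype.card_ne_zero))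
        (Or.inl (ENNReal.natCast_ne_top _))]
      congr 1
      rw [← Nat.cast_mul]
      congr 1
      exact (Fintype.card_prod _ _).symm
    have hXf : (fun ω => fun k => X k ω) = fun ω => FBs q K Gbar h (U ω) := by
      funext ω k
      rw [hX k]
      rfl
    rw [hXf]
    exact condMI_zero μ U hU hUnif (FAs q K Gbar) (FBs q K Gbar h) (FCs q K Gbar T)
      (FAs_add q K Gbar) (FBs_add q K Gbar h) (FCs_add q K Gbar T)
      (keyR q K Gbar h T enum hG2 hzero hbasis hlast hconn)
end

section
/- Consider general groupwise keys: a family 𝒢̄ of subsets of {1,…,K}, mutually independent keys S_𝒢 (𝒢 ∈ 𝒢̄), each uniformly distributed on (ZMod q)^{L_S}, and Z_k = (S_𝒢)_{𝒢∈𝒢̄, k∈𝒢}. Let T ⊆ {1,…,K} and let U_1, U_2 be disjoint nonempty sets with U_1 ∪ U_2 = {1,…,K}\T. If every 𝒢 ∈ 𝒢̄ with 𝒢 ∩ T = ∅ satisfies 𝒢 ⊆ U_1 or 𝒢 ⊆ U_2, then I((Z_k)_{k∈U_1}; (Z_k)_{k∈U_2} | (Z_k)_{k∈T}) = 0. -/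
open MeasureTheory ProbabilityTheory

section Aux

variable {Ω : Type*} [MeasurableSpace Ω] (μ : Measure Ω)

/-- Measure of a preimage of a finite set under a uniformly distributed RV. -/
lemma meas_preimage_of_unif {α : Type*} [Fintype α] [MeasurableSpace α]
    [MeasurableSingletonClass α]
    (V : Ω → α) (hV : Measurable V)
    (hunif : ∀ a : α, μ (V ⁻¹' {a}) = (Fintype.card α : ENNReal)⁻¹)
    (s : Finset α) :
    μ (V ⁻¹' ↑s) = (s.card : ENNReal) * (Fintype.card α : ENNReal)⁻¹ := by
  have hset : V ⁻¹' ↑s = ⋃ a ∈ s, V ⁻¹' {a} := by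
    ext ω; simp
  rw [hset, measure_biUnion_finset ?_ (fun a _ => hV (measurableSet_singleton a))]
  · simp only [hunif, Finset.sum_const, nsmul_eq_mul]
  · intro a _ b _ hab
    exact (Set.disjoint_singleton.2 hab).preimage V

/-- Entropy of an injective function of a "block" of a uniformly distributed RV. -/
lemma entr_of_unif [IsProbabilityMeasure μ]
    {α β γ δ : Type*} [Fintype α] [MeasurableSpace α] [MeasurableSingletonClass α]
    [Fintype β] [MeasurableSpace β] [MeasurableSingletonClass β]
    [Fintype γ] [Nonempty γ] [Fintype δ] [Nonempty δ]
    (V : Ω → α) (hV : Measurable V)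
    (hunif : ∀ a : α, μ (V ⁻¹' {a}) = (Fintype.card α : ENNReal)⁻¹)
    (e : α ≃ γ × δ) (g : γ → β) (hg : Function.Injective g) :
    entr μ (fun ω => g (e (V ω)).1) = Real.log (Fintype.card γ) := by
  classical
  set m := Fintype.card γ with hm
  set n := Fintype.card δ with hn
  have hm0 : 0 < m := Fintype.card_pos
  have hn0 : 0 < n := Fintype.card_pos
  have hcard : Fintype.card α = m * n := by
    rw [Fintype.card_congr e, Fintype.card_prod]
  set f : α → β := fun a => g (e a).1 with hf
  have hfm : Measurable f := measurable_of_countable f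
  have hmap : ∀ b : β, (μ.map (fun ω => f (V ω))) {b}
      = ((Finset.univ.filter (fun a => f a = b)).card : ENNReal)
        * (Fintype.card α : ENNReal)⁻¹ := by
    intro b
    rw [show (fun ω => f (V ω)) = f ∘ V from rfl,
      Measure.map_apply (hfm.comp hV) (measurableSet_singleton b)]
    have hpre : (f ∘ V) ⁻¹' {b}
        = V ⁻¹' ↑(Finset.univ.filter (fun a => f a = b)) := by
      ext ω; simp
    rw [hpre, meas_preimage_of_unif μ V hV hunif]
  have hfib : ∀ c : γ, (Finset.univ.filter (fun a => f a = g c)).card = n := by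
    intro c
    rw [← Fintype.card_subtype]
    refine Fintype.card_congr ?_
    exact
      { toFun := fun a => (e a.1).2
        invFun := fun d => ⟨e.symm (c, d), by simp [hf]⟩
        left_inv := by
          rintro ⟨a, ha⟩
          apply Subtype.ext
          have h1 : (e a).1 = c := hg ha
          have h2 : ((c, (e a).2) : γ × δ) = e a := by rw [← h1]
          simp [h2]
        right_inv := fun d => by simp }
  have hzero : ∀ b : β, b ∉ Finset.univ.image g →
      Real.negMulLog ((μ.map (fun ω => f (V ω))) {b}).toReal = 0 := by
    intro b hb
    have : (Finset.univ.filter (fun a => f a = b)).card = 0 := by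
      rw [Finset.card_eq_zero, Finset.filter_eq_empty_iff]
      intro a _ hab
      exact hb (Finset.mem_image.mpr ⟨(e a).1, Finset.mem_univ _, hab⟩)
    rw [hmap, this]
    simp
  have hval : ∀ b ∈ Finset.univ.image g,
      Real.negMulLog ((μ.map (fun ω => f (V ω))) {b}).toReal
        = Real.negMulLog ((m : ℝ)⁻¹) := by
    intro b hb
    obtain ⟨c, _, rfl⟩ := Finset.mem_image.mp hb
    rw [hmap, hfib, hcard]
    congr 2
    rw [ENNReal.toReal_mul, ENNReal.toReal_inv]
    push_cast
    field_simp
    simp [ENNReal.toReal_mul, mul_comm]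
  have : entr μ (fun ω => f (V ω))
      = ∑ b ∈ Finset.univ.image g,
          Real.negMulLog ((μ.map (fun ω => f (V ω))) {b}).toReal := by
    rw [entr]
    exact (Finset.sum_subset (Finset.subset_univ _) (fun b _ hb => hzero b hb)).symm
  rw [show (fun ω => g (e (V ω)).1) = fun ω => f (V ω) from rfl, this,
    Finset.sum_congr rfl hval, Finset.sum_const,
    Finset.card_image_of_injective _ hg, Finset.card_univ, ← hm,
    nsmul_eq_mul, Real.negMulLog, Real.log_inv]
  have hmR : (0:ℝ) < m := by exact_mod_cast hm0
  field_simp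

/-- The joint tuple of independent uniform RVs is uniform. -/
lemma unif_pi {ι κ : Type*} [Fintype ι] [DecidableEq ι] [Fintype κ] [MeasurableSpace κ]
    [MeasurableSingletonClass κ] [IsProbabilityMeasure μ]
    (S : ι → Ω → κ)
    (hSunif : ∀ i, ∀ a : κ, μ (S i ⁻¹' {a}) = (Fintype.card κ : ENNReal)⁻¹)
    (hind : iIndepFun S μ) (v : ι → κ) :
    μ ((fun ω i => S i ω) ⁻¹' {v}) = (Fintype.card (ι → κ) : ENNReal)⁻¹ := by
  classical
  have hset : (fun ω i => S i ω) ⁻¹' {v} = ⋂ i, S i ⁻¹' {v i} := by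
    ext ω
    simp [funext_iff]
  rw [hset, hind.meas_iInter (fun i => ⟨{v i}, measurableSet_singleton _, rfl⟩)]
  simp only [hSunif, Finset.prod_const, Finset.card_univ]
  rw [← ENNReal.inv_pow, Fintype.card_fun]
  push_cast
  rfl

/-- Auxiliary reindexing map for tuples of keys. -/
def keyMap {q K LS : ℕ} (Gbar : Finset (Finset (Fin K))) (W : Finset (Fin K))
    (p : Finset (Fin K) → Prop)
    (hp : ∀ g k, g ∈ Gbar → k ∈ W → k ∈ g → p g)
    (u : {i : {g : Finset (Fin K) // g ∈ Gbar} // p i.1} → (Fin LS → ZMod q)) :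
    ∀ k : {k : Fin K // k ∈ W},
      {g : Finset (Fin K) // g ∈ Gbar ∧ k.1 ∈ g} → (Fin LS → ZMod q) :=
  fun k g => u ⟨⟨g.1, g.2.1⟩, hp g.1 k.1 g.2.1 k.2 g.2.2⟩

end Aux

set_option maxHeartbeats 2000000 in
/-- for general groupwise keys, if every key group avoiding the colluding
set `T` lies entirely inside `U_1` or entirely inside `U_2` (where `U_1, U_2` partition
`[K]∖T`), then `I((Z_k)_{k∈U_1} ; (Z_k)_{k∈U_2} | (Z_k)_{k∈T}) = 0`. -/
theorem stmt16
    (q K LS : ℕ) [NeZero q] (hq : IsPrimePow q) (hK : 2 ≤ K)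
    {Ω : Type*} [MeasurableSpace Ω] (μ : Measure Ω) [IsProbabilityMeasure μ]
    (Gbar : Finset (Finset (Fin K)))
    (S : {g : Finset (Fin K) // g ∈ Gbar} → Ω → (Fin LS → ZMod q))
    (hSmeas : ∀ g, Measurable (S g))
    (hSunif : ∀ g, IsUnif μ (S g))
    (hSindep : iIndepFun S μ)
    (T : Finset (Fin K))
    (U1 U2 : Finset (Fin K)) (hU1 : U1.Nonempty) (hU2 : U2.Nonempty)
    (hdisj : Disjoint U1 U2) (hunion : U1 ∪ U2 = Tᶜ)
    (hsplit : ∀ g ∈ Gbar, g ∩ T = ∅ → g ⊆ U1 ∨ g ⊆ U2) :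
    condMI μ
      (fun ω => fun k : {k : Fin K // k ∈ U1} =>
        fun g : {g : Finset (Fin K) // g ∈ Gbar ∧ k.1 ∈ g} => S ⟨g.1, g.2.1⟩ ω)
      (fun ω => fun k : {k : Fin K // k ∈ U2} =>
        fun g : {g : Finset (Fin K) // g ∈ Gbar ∧ k.1 ∈ g} => S ⟨g.1, g.2.1⟩ ω)
      (fun ω => fun k : {k : Fin K // k ∈ T} =>
        fun g : {g : Finset (Fin K) // g ∈ Gbar ∧ k.1 ∈ g} => S ⟨g.1, g.2.1⟩ ω) = 0 := by
  classical
  haveI : Nonempty (ZMod q) := ⟨0⟩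
  set X := (fun ω => fun k : {k : Fin K // k ∈ U1} =>
        fun g : {g : Finset (Fin K) // g ∈ Gbar ∧ k.1 ∈ g} => S ⟨g.1, g.2.1⟩ ω) with hXdef
  set Y := (fun ω => fun k : {k : Fin K // k ∈ U2} =>
        fun g : {g : Finset (Fin K) // g ∈ Gbar ∧ k.1 ∈ g} => S ⟨g.1, g.2.1⟩ ω) with hYdef
  set Z := (fun ω => fun k : {k : Fin K // k ∈ T} =>
        fun g : {g : Finset (Fin K) // g ∈ Gbar ∧ k.1 ∈ g} => S ⟨g.1, g.2.1⟩ ω) with hZdef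
  have hV : Measurable (fun ω => fun i : {g : Finset (Fin K) // g ∈ Gbar} => S i ω) :=
    measurable_pi_lambda _ hSmeas
  have hVu : ∀ v : {g : Finset (Fin K) // g ∈ Gbar} → (Fin LS → ZMod q),
      μ ((fun ω => fun i : {g : Finset (Fin K) // g ∈ Gbar} => S i ω) ⁻¹' {v})
      = (Fintype.card ({g : Finset (Fin K) // g ∈ Gbar} → (Fin LS → ZMod q)) : ENNReal)⁻¹ :=
    fun v => unif_pi μ S hSunif hSindep v
  -- membership side conditions
  have hmem1 : ∀ g k, g ∈ Gbar → k ∈ U1 → k ∈ g → (fun g : Finset (Fin K) => (g ∩ (U1 ∪ T)).Nonempty) g :=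
    fun g k _ hk hkg => ⟨k, Finset.mem_inter.2 ⟨hkg, Finset.mem_union_left _ hk⟩⟩
  have hmemT1 : ∀ g k, g ∈ Gbar → k ∈ T → k ∈ g → (fun g : Finset (Fin K) => (g ∩ (U1 ∪ T)).Nonempty) g :=
    fun g k _ hk hkg => ⟨k, Finset.mem_inter.2 ⟨hkg, Finset.mem_union_right _ hk⟩⟩
  have hmem2 : ∀ g k, g ∈ Gbar → k ∈ U2 → k ∈ g → (fun g : Finset (Fin K) => (g ∩ (U2 ∪ T)).Nonempty) g :=
    fun g k _ hk hkg => ⟨k, Finset.mem_inter.2 ⟨hkg, Finset.mem_union_left _ hk⟩⟩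
  have hmemT2 : ∀ g k, g ∈ Gbar → k ∈ T → k ∈ g → (fun g : Finset (Fin K) => (g ∩ (U2 ∪ T)).Nonempty) g :=
    fun g k _ hk hkg => ⟨k, Finset.mem_inter.2 ⟨hkg, Finset.mem_union_right _ hk⟩⟩
  have hmemT0 : ∀ g k, g ∈ Gbar → k ∈ T → k ∈ g → (fun g : Finset (Fin K) => (g ∩ T).Nonempty) g :=
    fun g k _ hk hkg => ⟨k, Finset.mem_inter.2 ⟨hkg, hk⟩⟩
  have hmem31 : ∀ g k, g ∈ Gbar → k ∈ U1 → k ∈ g → (fun g : Finset (Fin K) => (g ∩ (U1 ∪ U2 ∪ T)).Nonempty) g :=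
    fun g k _ hk hkg => ⟨k, Finset.mem_inter.2 ⟨hkg,
      Finset.mem_union_left _ (Finset.mem_union_left _ hk)⟩⟩
  have hmem32 : ∀ g k, g ∈ Gbar → k ∈ U2 → k ∈ g → (fun g : Finset (Fin K) => (g ∩ (U1 ∪ U2 ∪ T)).Nonempty) g :=
    fun g k _ hk hkg => ⟨k, Finset.mem_inter.2 ⟨hkg,
      Finset.mem_union_left _ (Finset.mem_union_right _ hk)⟩⟩
  have hmemT3 : ∀ g k, g ∈ Gbar → k ∈ T → k ∈ g → (fun g : Finset (Fin K) => (g ∩ (U1 ∪ U2 ∪ T)).Nonempty) g :=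
    fun g k _ hk hkg => ⟨k, Finset.mem_inter.2 ⟨hkg, Finset.mem_union_right _ hk⟩⟩
  -- the injective reading maps
  have hgZ : Function.Injective (keyMap (q := q) (LS := LS) Gbar T (fun g : Finset (Fin K) => (g ∩ T).Nonempty) hmemT0) := by
    intro u u' h
    funext i
    obtain ⟨⟨g, hg⟩, hne⟩ := i
    obtain ⟨k, hk⟩ := hne
    rw [Finset.mem_inter] at hk
    exact congrFun (congrFun h ⟨k, hk.2⟩) ⟨g, hg, hk.1⟩
  have hgXZ : Function.Injective (fun u : ({i : {g : Finset (Fin K) // g ∈ Gbar} // (fun g : Finset (Fin K) => (g ∩ (U1 ∪ T)).Nonempty) i.1} → (Fin LS → ZMod q)) =>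
      (keyMap (q := q) (LS := LS) Gbar U1 (fun g : Finset (Fin K) => (g ∩ (U1 ∪ T)).Nonempty) hmem1 u,
       keyMap (q := q) (LS := LS) Gbar T (fun g : Finset (Fin K) => (g ∩ (U1 ∪ T)).Nonempty) hmemT1 u)) := by
    intro u u' h
    funext i
    obtain ⟨⟨g, hg⟩, hne⟩ := i
    obtain ⟨k, hk⟩ := hne
    rw [Finset.mem_inter, Finset.mem_union] at hk
    rcases hk.2 with hkU | hkT
    · exact congrFun (congrFun (congrArg Prod.fst h) ⟨k, hkU⟩) ⟨g, hg, hk.1⟩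
    · exact congrFun (congrFun (congrArg Prod.snd h) ⟨k, hkT⟩) ⟨g, hg, hk.1⟩
  have hgYZ : Function.Injective (fun u : ({i : {g : Finset (Fin K) // g ∈ Gbar} // (fun g : Finset (Fin K) => (g ∩ (U2 ∪ T)).Nonempty) i.1} → (Fin LS → ZMod q)) =>
      (keyMap (q := q) (LS := LS) Gbar U2 (fun g : Finset (Fin K) => (g ∩ (U2 ∪ T)).Nonempty) hmem2 u,
       keyMap (q := q) (LS := LS) Gbar T (fun g : Finset (Fin K) => (g ∩ (U2 ∪ T)).Nonempty) hmemT2 u)) := by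
    intro u u' h
    funext i
    obtain ⟨⟨g, hg⟩, hne⟩ := i
    obtain ⟨k, hk⟩ := hne
    rw [Finset.mem_inter, Finset.mem_union] at hk
    rcases hk.2 with hkU | hkT
    · exact congrFun (congrFun (congrArg Prod.fst h) ⟨k, hkU⟩) ⟨g, hg, hk.1⟩
    · exact congrFun (congrFun (congrArg Prod.snd h) ⟨k, hkT⟩) ⟨g, hg, hk.1⟩
  have hgXYZ : Function.Injective (fun u : ({i : {g : Finset (Fin K) // g ∈ Gbar} // (fun g : Finset (Fin K) => (g ∩ (U1 ∪ U2 ∪ T)).Nonempty) i.1} → (Fin LS → ZMod q)) =>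
      ((keyMap (q := q) (LS := LS) Gbar U1 (fun g : Finset (Fin K) => (g ∩ (U1 ∪ U2 ∪ T)).Nonempty) hmem31 u,
        keyMap (q := q) (LS := LS) Gbar U2 (fun g : Finset (Fin K) => (g ∩ (U1 ∪ U2 ∪ T)).Nonempty) hmem32 u),
       keyMap (q := q) (LS := LS) Gbar T (fun g : Finset (Fin K) => (g ∩ (U1 ∪ U2 ∪ T)).Nonempty) hmemT3 u)) := by
    intro u u' h
    funext i
    obtain ⟨⟨g, hg⟩, hne⟩ := i
    obtain ⟨k, hk⟩ := hne
    rw [Finset.mem_inter, Finset.mem_union, Finset.mem_union] at hk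
    rcases hk.2 with (hkU | hkU) | hkT
    · exact congrFun (congrFun (congrArg (fun z => z.1.1) h) ⟨k, hkU⟩) ⟨g, hg, hk.1⟩
    · exact congrFun (congrFun (congrArg (fun z => z.1.2) h) ⟨k, hkU⟩) ⟨g, hg, hk.1⟩
    · exact congrFun (congrFun (congrArg Prod.snd h) ⟨k, hkT⟩) ⟨g, hg, hk.1⟩
  -- entropy computations
  have hZent : entr μ Z = Real.log (Fintype.card ({i : {g : Finset (Fin K) // g ∈ Gbar} // (fun g : Finset (Fin K) => (g ∩ T).Nonempty) i.1} → (Fin LS → ZMod q))) :=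
    entr_of_unif μ (fun ω => fun i : {g : Finset (Fin K) // g ∈ Gbar} => S i ω) hV hVu
      (Equiv.piEquivPiSubtypeProd (fun i : {g : Finset (Fin K) // g ∈ Gbar} => (fun g : Finset (Fin K) => (g ∩ T).Nonempty) i.1) (fun _ => Fin LS → ZMod q)) _ hgZ
  have hXZent : entr μ (fun ω => (X ω, Z ω)) = Real.log (Fintype.card ({i : {g : Finset (Fin K) // g ∈ Gbar} // (fun g : Finset (Fin K) => (g ∩ (U1 ∪ T)).Nonempty) i.1} → (Fin LS → ZMod q))) :=
    entr_of_unif μ (fun ω => fun i : {g : Finset (Fin K) // g ∈ Gbar} => S i ω) hV hVu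
      (Equiv.piEquivPiSubtypeProd (fun i : {g : Finset (Fin K) // g ∈ Gbar} => (fun g : Finset (Fin K) => (g ∩ (U1 ∪ T)).Nonempty) i.1) (fun _ => Fin LS → ZMod q)) _ hgXZ
  have hYZent : entr μ (fun ω => (Y ω, Z ω)) = Real.log (Fintype.card ({i : {g : Finset (Fin K) // g ∈ Gbar} // (fun g : Finset (Fin K) => (g ∩ (U2 ∪ T)).Nonempty) i.1} → (Fin LS → ZMod q))) :=
    entr_of_unif μ (fun ω => fun i : {g : Finset (Fin K) // g ∈ Gbar} => S i ω) hV hVu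
      (Equiv.piEquivPiSubtypeProd (fun i : {g : Finset (Fin K) // g ∈ Gbar} => (fun g : Finset (Fin K) => (g ∩ (U2 ∪ T)).Nonempty) i.1) (fun _ => Fin LS → ZMod q)) _ hgYZ
  have hXYZent : entr μ (fun ω => ((X ω, Y ω), Z ω)) = Real.log (Fintype.card ({i : {g : Finset (Fin K) // g ∈ Gbar} // (fun g : Finset (Fin K) => (g ∩ (U1 ∪ U2 ∪ T)).Nonempty) i.1} → (Fin LS → ZMod q))) :=
    entr_of_unif μ (fun ω => fun i : {g : Finset (Fin K) // g ∈ Gbar} => S i ω) hV hVu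
      (Equiv.piEquivPiSubtypeProd (fun i : {g : Finset (Fin K) // g ∈ Gbar} => (fun g : Finset (Fin K) => (g ∩ (U1 ∪ U2 ∪ T)).Nonempty) i.1) (fun _ => Fin LS → ZMod q)) _ hgXYZ
  -- cardinalities
  have hc1 : Fintype.card ({i : {g : Finset (Fin K) // g ∈ Gbar} // (fun g : Finset (Fin K) => (g ∩ (U1 ∪ T)).Nonempty) i.1} → (Fin LS → ZMod q)) = Fintype.card (Fin LS → ZMod q) ^
      (Finset.univ.filter (fun i : {g : Finset (Fin K) // g ∈ Gbar} => (fun g : Finset (Fin K) => (g ∩ (U1 ∪ T)).Nonempty) i.1)).card := by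
    rw [Fintype.card_fun, Fintype.card_subtype]
  have hc2 : Fintype.card ({i : {g : Finset (Fin K) // g ∈ Gbar} // (fun g : Finset (Fin K) => (g ∩ (U2 ∪ T)).Nonempty) i.1} → (Fin LS → ZMod q)) = Fintype.card (Fin LS → ZMod q) ^
      (Finset.univ.filter (fun i : {g : Finset (Fin K) // g ∈ Gbar} => (fun g : Finset (Fin K) => (g ∩ (U2 ∪ T)).Nonempty) i.1)).card := by
    rw [Fintype.card_fun, Fintype.card_subtype]
  have hc0 : Fintype.card ({i : {g : Finset (Fin K) // g ∈ Gbar} // (fun g : Finset (Fin K) => (g ∩ T).Nonempty) i.1} → (Fin LS → ZMod q)) = Fintype.card (Fin LS → ZMod q) ^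
      (Finset.univ.filter (fun i : {g : Finset (Fin K) // g ∈ Gbar} => (fun g : Finset (Fin K) => (g ∩ T).Nonempty) i.1)).card := by
    rw [Fintype.card_fun, Fintype.card_subtype]
  have hc3 : Fintype.card ({i : {g : Finset (Fin K) // g ∈ Gbar} // (fun g : Finset (Fin K) => (g ∩ (U1 ∪ U2 ∪ T)).Nonempty) i.1} → (Fin LS → ZMod q)) = Fintype.card (Fin LS → ZMod q) ^
      (Finset.univ.filter (fun i : {g : Finset (Fin K) // g ∈ Gbar} => (fun g : Finset (Fin K) => (g ∩ (U1 ∪ U2 ∪ T)).Nonempty) i.1)).card := by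
    rw [Fintype.card_fun, Fintype.card_subtype]
  -- the combinatorial identity
  have hFunion : (Finset.univ.filter (fun i : {g : Finset (Fin K) // g ∈ Gbar} => (fun g : Finset (Fin K) => (g ∩ (U1 ∪ T)).Nonempty) i.1))
      ∪ (Finset.univ.filter (fun i : {g : Finset (Fin K) // g ∈ Gbar} => (fun g : Finset (Fin K) => (g ∩ (U2 ∪ T)).Nonempty) i.1))
      = (Finset.univ.filter (fun i : {g : Finset (Fin K) // g ∈ Gbar} => (fun g : Finset (Fin K) => (g ∩ (U1 ∪ U2 ∪ T)).Nonempty) i.1)) := by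
    ext i
    simp only [Finset.mem_union, Finset.mem_filter, Finset.mem_univ, true_and,
      Finset.Nonempty, Finset.mem_inter, Finset.mem_union]
    constructor
    · rintro (⟨k, hk1, hk2⟩ | ⟨k, hk1, hk2⟩) <;> exact ⟨k, hk1, by tauto⟩
    · rintro ⟨k, hk1, (hk2 | hk2) | hk2⟩
      · exact Or.inl ⟨k, hk1, Or.inl hk2⟩
      · exact Or.inr ⟨k, hk1, Or.inl hk2⟩
      · exact Or.inl ⟨k, hk1, Or.inr hk2⟩
  have hFinter : (Finset.univ.filter (fun i : {g : Finset (Fin K) // g ∈ Gbar} => (fun g : Finset (Fin K) => (g ∩ (U1 ∪ T)).Nonempty) i.1))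
      ∩ (Finset.univ.filter (fun i : {g : Finset (Fin K) // g ∈ Gbar} => (fun g : Finset (Fin K) => (g ∩ (U2 ∪ T)).Nonempty) i.1))
      = (Finset.univ.filter (fun i : {g : Finset (Fin K) // g ∈ Gbar} => (fun g : Finset (Fin K) => (g ∩ T).Nonempty) i.1)) := by
    ext i
    obtain ⟨g, hg⟩ := i
    simp only [Finset.mem_inter, Finset.mem_filter, Finset.mem_univ, true_and]
    constructor
    · rintro ⟨h1, h2⟩
      by_contra hT
      rw [Finset.not_nonempty_iff_eq_empty] at hT
      have hkT : ∀ k ∈ g, k ∉ T := fun k hk hkT =>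
        Finset.eq_empty_iff_forall_notMem.mp hT k (Finset.mem_inter.2 ⟨hk, hkT⟩)
      rcases hsplit g hg hT with hsub | hsub
      · obtain ⟨k, hk⟩ := h2
        rw [Finset.mem_inter, Finset.mem_union] at hk
        rcases hk.2 with h | h
        · exact (Finset.disjoint_left.mp hdisj (hsub hk.1)) h
        · exact hkT k hk.1 h
      · obtain ⟨k, hk⟩ := h1
        rw [Finset.mem_inter, Finset.mem_union] at hk
        rcases hk.2 with h | h
        · exact (Finset.disjoint_left.mp hdisj h) (hsub hk.1)
        · exact hkT k hk.1 h
    · rintro ⟨k, hk⟩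
      rw [Finset.mem_inter] at hk
      exact ⟨⟨k, Finset.mem_inter.2 ⟨hk.1, Finset.mem_union_right _ hk.2⟩⟩,
        ⟨k, Finset.mem_inter.2 ⟨hk.1, Finset.mem_union_right _ hk.2⟩⟩⟩
  have hcards : (Finset.univ.filter (fun i : {g : Finset (Fin K) // g ∈ Gbar} => (fun g : Finset (Fin K) => (g ∩ (U1 ∪ U2 ∪ T)).Nonempty) i.1)).card
      + (Finset.univ.filter (fun i : {g : Finset (Fin K) // g ∈ Gbar} => (fun g : Finset (Fin K) => (g ∩ T).Nonempty) i.1)).card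
      = (Finset.univ.filter (fun i : {g : Finset (Fin K) // g ∈ Gbar} => (fun g : Finset (Fin K) => (g ∩ (U1 ∪ T)).Nonempty) i.1)).card
      + (Finset.univ.filter (fun i : {g : Finset (Fin K) // g ∈ Gbar} => (fun g : Finset (Fin K) => (g ∩ (U2 ∪ T)).Nonempty) i.1)).card := by
    rw [← hFunion, ← hFinter]
    exact Finset.card_union_add_card_inter _ _
  -- put everything together
  have hrw : condMI μ X Y Z
      = entr μ (fun ω => (X ω, Z ω)) + entr μ (fun ω => (Y ω, Z ω))
        - entr μ (fun ω => ((X ω, Y ω), Z ω)) - entr μ Z := by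
    simp only [condMI, condEntr]
    ring
  rw [hrw, hXZent, hYZent, hXYZent, hZent, hc1, hc2, hc3, hc0]
  push_cast
  rw [Real.log_pow, Real.log_pow, Real.log_pow, Real.log_pow]
  have hcast : ((Finset.univ.filter (fun i : {g : Finset (Fin K) // g ∈ Gbar} => (fun g : Finset (Fin K) => (g ∩ (U1 ∪ T)).Nonempty) i.1)).card : ℝ)
      + ((Finset.univ.filter (fun i : {g : Finset (Fin K) // g ∈ Gbar} => (fun g : Finset (Fin K) => (g ∩ (U2 ∪ T)).Nonempty) i.1)).card : ℝ)
      = ((Finset.univ.filter (fun i : {g : Finset (Fin K) // g ∈ Gbar} => (fun g : Finset (Fin K) => (g ∩ (U1 ∪ U2 ∪ T)).Nonempty) i.1)).card : ℝ)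
      + ((Finset.univ.filter (fun i : {g : Finset (Fin K) // g ∈ Gbar} => (fun g : Finset (Fin K) => (g ∩ T).Nonempty) i.1)).card : ℝ) := by
    exact_mod_cast hcards.symm
  linear_combination Real.log (Fintype.card (Fin LS → ZMod q)) * hcast
end
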